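/- In the GHZ gamble, suppose for each of the four algebras B1–B4 the probabilities of its eight atoms are nonnegative and sum to 1, and the probabilities of the four atoms not listed in (1) vanish in each algebra (as forced by p(S)=1). Then the sum P of the probabilities of the sixteen events listed in (1) equals 4, while for any classical probability measure on six events A1,B1,C1,A2,B2,C2 the corresponding sum is at most 3; hence no classical probability measure reproduces these sixteen probabilities. -/
import Mathlib


open MeasureTheory

/-- The sixteen GHZ events of (1), arranged by algebra `B1,…,B4` (first index)
and by slot within each algebra (second index). -/
def ghzEvents {Ω : Type*} (A1 B1 C1 A2 B2 C2 : Set Ω) : Fin 4 → Fin 4 → Set Ω :=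
  ![![A1ᶜ ∩ B1 ∩ C1, A1 ∩ B1ᶜ ∩ C1, A1 ∩ B1 ∩ C1ᶜ, A1ᶜ ∩ B1ᶜ ∩ C1ᶜ],
    ![A1 ∩ B2 ∩ C2, A1ᶜ ∩ B2ᶜ ∩ C2, A1ᶜ ∩ B2 ∩ C2ᶜ, A1 ∩ B2ᶜ ∩ C2ᶜ],
    ![A2 ∩ B1 ∩ C2, A2ᶜ ∩ B1ᶜ ∩ C2, A2ᶜ ∩ B1 ∩ C2ᶜ, A2 ∩ B1ᶜ ∩ C2ᶜ],
    ![A2 ∩ B2 ∩ C1, A2ᶜ ∩ B2ᶜ ∩ C1, A2ᶜ ∩ B2 ∩ C1ᶜ, A2 ∩ B2ᶜ ∩ C1ᶜ]]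

set_option maxHeartbeats 1000000

/-- In any classical probability space, the sum of the probabilities of the
sixteen GHZ events is at most `3`. -/
lemma ghz_classical_bound {Ω : Type} [MeasurableSpace Ω] (μ : Measure Ω)
    (hμ : IsProbabilityMeasure μ) (A1 B1 C1 A2 B2 C2 : Set Ω)
    (hA1 : MeasurableSet A1) (hB1 : MeasurableSet B1) (hC1 : MeasurableSet C1)
    (hA2 : MeasurableSet A2) (hB2 : MeasurableSet B2) (hC2 : MeasurableSet C2) :
    ∑ i : Fin 4, ∑ j : Fin 4, (μ (ghzEvents A1 B1 C1 A2 B2 C2 i j)).toReal ≤ 3 := by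
  set r : Set Ω → ℝ := fun s => (μ s).toReal with hr
  have key : ∀ X Y Z W : Set Ω, MeasurableSet Y → MeasurableSet Z → MeasurableSet W →
      Disjoint X Y → Disjoint (X ∪ Y) Z → Disjoint (X ∪ Y ∪ Z) W →
      r X + r Y + r Z + r W = r (X ∪ Y ∪ Z ∪ W) := by
    intro X Y Z W hY hZ hW d1 d2 d3
    simp only [hr]
    rw [measure_union d3 hW, measure_union d2 hZ, measure_union d1 hY,
        ENNReal.toReal_add, ENNReal.toReal_add, ENNReal.toReal_add] <;>
      simp [ENNReal.add_ne_top, measure_ne_top]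
  have H : ∀ s t : Set Ω, MeasurableSet t → r (s ∪ t) + r (s ∩ t) = r s + r t := by
    intro s t ht
    have h := measure_union_add_inter (μ := μ) s ht
    have h2 := congrArg ENNReal.toReal h
    rwa [ENNReal.toReal_add (measure_ne_top _ _) (measure_ne_top _ _),
         ENNReal.toReal_add (measure_ne_top _ _) (measure_ne_top _ _)] at h2
  have hle1 : ∀ s : Set Ω, r s ≤ 1 := by
    intro s
    have h := prob_le_one (μ := μ) (s := s)
    simpa [hr] using ENNReal.toReal_mono (by norm_num) h
  have mAtom : ∀ {X Y Z : Set Ω}, MeasurableSet X → MeasurableSet Y → MeasurableSet Z →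
      MeasurableSet (X ∩ Y ∩ Z) := fun hX hY hZ => (hX.inter hY).inter hZ
  have rowA : ∀ X Y Z : Set Ω, MeasurableSet X → MeasurableSet Y → MeasurableSet Z →
      r (Xᶜ ∩ Y ∩ Z) + r (X ∩ Yᶜ ∩ Z) + r (X ∩ Y ∩ Zᶜ) + r (Xᶜ ∩ Yᶜ ∩ Zᶜ) =
      r (Xᶜ ∩ Y ∩ Z ∪ X ∩ Yᶜ ∩ Z ∪ X ∩ Y ∩ Zᶜ ∪ Xᶜ ∩ Yᶜ ∩ Zᶜ) := by
    intro X Y Z hX hY hZ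
    exact key _ _ _ _ (mAtom hX hY.compl hZ) (mAtom hX hY hZ.compl)
      (mAtom hX.compl hY.compl hZ.compl)
      (by simp only [Set.disjoint_union_left, Set.disjoint_left, Set.mem_inter_iff,
            Set.mem_compl_iff, Set.mem_union]; tauto)
      (by simp only [Set.disjoint_union_left, Set.disjoint_left, Set.mem_inter_iff,
            Set.mem_compl_iff, Set.mem_union]; tauto)
      (by simp only [Set.disjoint_union_left, Set.disjoint_left, Set.mem_inter_iff,
            Set.mem_compl_iff, Set.mem_union]; tauto)
  have rowB : ∀ X Y Z : Set Ω, MeasurableSet X → MeasurableSet Y → MeasurableSet Z →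
      r (X ∩ Y ∩ Z) + r (Xᶜ ∩ Yᶜ ∩ Z) + r (Xᶜ ∩ Y ∩ Zᶜ) + r (X ∩ Yᶜ ∩ Zᶜ) =
      r (X ∩ Y ∩ Z ∪ Xᶜ ∩ Yᶜ ∩ Z ∪ Xᶜ ∩ Y ∩ Zᶜ ∪ X ∩ Yᶜ ∩ Zᶜ) := by
    intro X Y Z hX hY hZ
    exact key _ _ _ _ (mAtom hX.compl hY.compl hZ) (mAtom hX.compl hY hZ.compl)
      (mAtom hX hY.compl hZ.compl)
      (by simp only [Set.disjoint_union_left, Set.disjoint_left, Set.mem_inter_iff,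
            Set.mem_compl_iff, Set.mem_union]; tauto)
      (by simp only [Set.disjoint_union_left, Set.disjoint_left, Set.mem_inter_iff,
            Set.mem_compl_iff, Set.mem_union]; tauto)
      (by simp only [Set.disjoint_union_left, Set.disjoint_left, Set.mem_inter_iff,
            Set.mem_compl_iff, Set.mem_union]; tauto)
  set u0 := A1ᶜ ∩ B1 ∩ C1 ∪ A1 ∩ B1ᶜ ∩ C1 ∪ A1 ∩ B1 ∩ C1ᶜ ∪ A1ᶜ ∩ B1ᶜ ∩ C1ᶜ with hu0
  set u1 := A1 ∩ B2 ∩ C2 ∪ A1ᶜ ∩ B2ᶜ ∩ C2 ∪ A1ᶜ ∩ B2 ∩ C2ᶜ ∪ A1 ∩ B2ᶜ ∩ C2ᶜ with hu1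
  set u2 := A2 ∩ B1 ∩ C2 ∪ A2ᶜ ∩ B1ᶜ ∩ C2 ∪ A2ᶜ ∩ B1 ∩ C2ᶜ ∪ A2 ∩ B1ᶜ ∩ C2ᶜ with hu2
  set u3 := A2 ∩ B2 ∩ C1 ∪ A2ᶜ ∩ B2ᶜ ∩ C1 ∪ A2ᶜ ∩ B2 ∩ C1ᶜ ∪ A2 ∩ B2ᶜ ∩ C1ᶜ with hu3
  have hmu1 : MeasurableSet u1 := by
    rw [hu1]
    exact (((mAtom hA1 hB2 hC2).union (mAtom hA1.compl hB2.compl hC2)).union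
      (mAtom hA1.compl hB2 hC2.compl)).union (mAtom hA1 hB2.compl hC2.compl)
  have hmu2 : MeasurableSet u2 := by
    rw [hu2]
    exact (((mAtom hA2 hB1 hC2).union (mAtom hA2.compl hB1.compl hC2)).union
      (mAtom hA2.compl hB1 hC2.compl)).union (mAtom hA2 hB1.compl hC2.compl)
  have hmu3 : MeasurableSet u3 := by
    rw [hu3]
    exact (((mAtom hA2 hB2 hC1).union (mAtom hA2.compl hB2.compl hC1)).union
      (mAtom hA2.compl hB2 hC1.compl)).union (mAtom hA2 hB2.compl hC1.compl)
  have hempty : u0 ∩ u1 ∩ u2 ∩ u3 = ∅ := by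
    rw [hu0, hu1, hu2, hu3]
    apply Set.eq_empty_iff_forall_notMem.2
    rintro x ⟨⟨⟨h0, h1⟩, h2⟩, h3⟩
    simp only [Set.mem_union, Set.mem_inter_iff, Set.mem_compl_iff] at h0 h1 h2 h3
    obtain ((⟨⟨p1,p2⟩,p3⟩|⟨⟨p1,p2⟩,p3⟩)|⟨⟨p1,p2⟩,p3⟩)|⟨⟨p1,p2⟩,p3⟩ := h0 <;>
    obtain ((⟨⟨q1,q2⟩,q3⟩|⟨⟨q1,q2⟩,q3⟩)|⟨⟨q1,q2⟩,q3⟩)|⟨⟨q1,q2⟩,q3⟩ := h1 <;>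
    obtain ((⟨⟨s1,s2⟩,s3⟩|⟨⟨s1,s2⟩,s3⟩)|⟨⟨s1,s2⟩,s3⟩)|⟨⟨s1,s2⟩,s3⟩ := h2 <;>
    obtain ((⟨⟨t1,t2⟩,t3⟩|⟨⟨t1,t2⟩,t3⟩)|⟨⟨t1,t2⟩,t3⟩)|⟨⟨t1,t2⟩,t3⟩ := h3 <;>
    tauto
  have hre : r (u0 ∩ u1 ∩ u2 ∩ u3) = 0 := by rw [hempty]; simp [hr]
  have e1 := H u0 u1 hmu1
  have e2 := H (u0 ∩ u1) u2 hmu2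
  have e3 := H (u0 ∩ u1 ∩ u2) u3 hmu3
  have r0 : ∑ j : Fin 4, (μ (ghzEvents A1 B1 C1 A2 B2 C2 0 j)).toReal = r u0 := by
    rw [Fin.sum_univ_four, hu0]; exact rowA A1 B1 C1 hA1 hB1 hC1
  have r1 : ∑ j : Fin 4, (μ (ghzEvents A1 B1 C1 A2 B2 C2 1 j)).toReal = r u1 := by
    rw [Fin.sum_univ_four, hu1]; exact rowB A1 B2 C2 hA1 hB2 hC2
  have r2 : ∑ j : Fin 4, (μ (ghzEvents A1 B1 C1 A2 B2 C2 2 j)).toReal = r u2 := by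
    rw [Fin.sum_univ_four, hu2]; exact rowB A2 B1 C2 hA2 hB1 hC2
  have r3 : ∑ j : Fin 4, (μ (ghzEvents A1 B1 C1 A2 B2 C2 3 j)).toReal = r u3 := by
    rw [Fin.sum_univ_four, hu3]; exact rowB A2 B2 C1 hA2 hB2 hC1
  rw [Fin.sum_univ_four, r0, r1, r2, r3]
  have b1 := hle1 (u0 ∪ u1)
  have b2 := hle1 ((u0 ∩ u1) ∪ u2)
  have b3 := hle1 ((u0 ∩ u1 ∩ u2) ∪ u3)
  linarith [e1, e2, e3, hre, b1, b2, b3]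

/-- GHZ gamble: with the four unlisted atoms of each algebra `B1,…,B4` having
probability 0 (as forced by `p(S) = 1`), the sixteen listed probabilities sum
to `P = 4`; yet in any classical probability space the corresponding sixteen
probabilities sum to at most 3; hence no classical probability measure
reproduces the sixteen probabilities. Probabilities of algebra `i` are
`p i 0, …, p i 3` for the listed atoms and `p i 4, …, p i 7` for the unlisted. -/
theorem ghz_gamble_no_classical_model
    (p : Fin 4 → Fin 8 → ℝ)
    (hnn : ∀ i j, 0 ≤ p i j)
    (hsum : ∀ i, ∑ j, p i j = 1)
    (hzero : ∀ i, ∀ j : Fin 8, 4 ≤ (j : ℕ) → p i j = 0) :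
    (∑ i : Fin 4, (p i 0 + p i 1 + p i 2 + p i 3)) = 4 ∧
    (∀ (Ω : Type) (_ : MeasurableSpace Ω) (μ : Measure Ω),
      IsProbabilityMeasure μ → ∀ A1 B1 C1 A2 B2 C2 : Set Ω,
      MeasurableSet A1 → MeasurableSet B1 → MeasurableSet C1 →
      MeasurableSet A2 → MeasurableSet B2 → MeasurableSet C2 →
      ∑ i : Fin 4, ∑ j : Fin 4, (μ (ghzEvents A1 B1 C1 A2 B2 C2 i j)).toReal ≤ 3) ∧
    ¬ ∃ (Ω : Type) (_ : MeasurableSpace Ω) (μ : Measure Ω),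
      IsProbabilityMeasure μ ∧ ∃ A1 B1 C1 A2 B2 C2 : Set Ω,
      MeasurableSet A1 ∧ MeasurableSet B1 ∧ MeasurableSet C1 ∧
      MeasurableSet A2 ∧ MeasurableSet B2 ∧ MeasurableSet C2 ∧
      ∀ (i : Fin 4) (j : Fin 4),
        (μ (ghzEvents A1 B1 C1 A2 B2 C2 i j)).toReal = p i (Fin.castLE (by omega) j) := by
  have hrow : ∀ i, p i 0 + p i 1 + p i 2 + p i 3 = 1 := by
    intro i
    have h := hsum i
    rw [Fin.sum_univ_eight] at h
    have z4 := hzero i 4 (by decide)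
    have z5 := hzero i 5 (by decide)
    have z6 := hzero i 6 (by decide)
    have z7 := hzero i 7 (by decide)
    linarith
  have h4 : (∑ i : Fin 4, (p i 0 + p i 1 + p i 2 + p i 3)) = 4 := by
    rw [Fin.sum_univ_four, hrow 0, hrow 1, hrow 2, hrow 3]; norm_num
  refine ⟨h4, ?_, ?_⟩
  · intro Ω mΩ μ hμ A1 B1 C1 A2 B2 C2 hA1 hB1 hC1 hA2 hB2 hC2
    exact ghz_classical_bound μ hμ A1 B1 C1 A2 B2 C2 hA1 hB1 hC1 hA2 hB2 hC2
  · rintro ⟨Ω, mΩ, μ, hμ, A1, B1, C1, A2, B2, C2,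
      hA1, hB1, hC1, hA2, hB2, hC2, heq⟩
    have hb := ghz_classical_bound μ hμ A1 B1 C1 A2 B2 C2 hA1 hB1 hC1 hA2 hB2 hC2
    have hs : ∑ i : Fin 4, ∑ j : Fin 4,
        (μ (ghzEvents A1 B1 C1 A2 B2 C2 i j)).toReal = 4 := by
      have hrow' : ∀ i : Fin 4,
          ∑ j : Fin 4, (μ (ghzEvents A1 B1 C1 A2 B2 C2 i j)).toReal = 1 := by
        intro i
        rw [Fin.sum_univ_four, heq i 0, heq i 1, heq i 2, heq i 3]
        exact hrow i
      rw [Fin.sum_univ_four, hrow' 0, hrow' 1, hrow' 2, hrow' 3]; norm_num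
    linarith
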